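/- A group possessing the ascending chain condition on centralizers cannot contain an infinite strictly ascending chain of centralizers; in particular, any linear group over a field satisfies the ascending chain condition on centralizers. -/

import Mathlib

/-- Every linear group (i.e. every subgroup of `GL(n, F)` for a field `F`) satisfies the
ascending chain condition on centralizers: every ascending chain of centralizers of
subsets stabilizes, so there is no infinite strictly ascending chain of centralizers. -/
theorem linear_group_acc_on_centralizers
    (F : Type*) [Field F] (n : ℕ) (G : Subgroup (GL (Fin n) F))
    (S : ℕ → Set G)
    (hchain : ∀ k : ℕ, Subgroup.centralizer (S k) ≤ Subgroup.centralizer (S (k + 1))) :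
    (∃ N : ℕ, ∀ m : ℕ, N ≤ m →
      Subgroup.centralizer (S m) = Subgroup.centralizer (S N)) ∧
    ¬ StrictMono (fun k => Subgroup.centralizer (S k)) := by
  set f : G → Matrix (Fin n) (Fin n) F :=
    fun g => ((g : GL (Fin n) F) : Matrix (Fin n) (Fin n) F) with hf
  have hfinj : Function.Injective f := by
    intro a b h
    exact Subtype.ext (Units.ext h)
  have hfmul : ∀ a b : G, f (a * b) = f a * f b := fun a b => rfl
  have hmono : Monotone fun k => Subgroup.centralizer (S k) :=
    monotone_nat_of_le_succ hchain
  set V : ℕ →o Submodule F (Matrix (Fin n) (Fin n) F) :=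
    ⟨fun k => Submodule.span F (f '' (Subgroup.centralizer (S k) : Set G)),
     fun a b hab => Submodule.span_mono (Set.image_mono (hmono hab))⟩ with hV
  obtain ⟨N, hN⟩ := (monotone_stabilizes_iff_noetherian (R := F)
    (M := Matrix (Fin n) (Fin n) F)).mpr inferInstance V
  have key : ∀ m : ℕ, N ≤ m →
      Subgroup.centralizer (S m) = Subgroup.centralizer (S N) := by
    intro m hm
    refine le_antisymm ?_ (hmono hm)
    intro x hx
    rw [Subgroup.mem_centralizer_iff]
    intro s hs
    have hxV : f x ∈ V N := by
      rw [hN m hm]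
      exact Submodule.subset_span ⟨x, hx, rfl⟩
    have hsub : (V N : Submodule F (Matrix (Fin n) (Fin n) F)) ≤
        Subalgebra.toSubmodule (Subalgebra.centralizer F {f s}) := by
      show Submodule.span F (f '' (Subgroup.centralizer (S N) : Set G)) ≤ _
      rw [Submodule.span_le]
      rintro _ ⟨g, hg, rfl⟩
      rw [SetLike.mem_coe, Subalgebra.mem_toSubmodule, Subalgebra.mem_centralizer_iff]
      rintro y rfl
      rw [← hfmul, ← hfmul]
      exact congrArg f ((Subgroup.mem_centralizer_iff.mp hg) s hs)
    have hcomm : f s * f x = f x * f s := by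
      have := hsub hxV
      rw [Subalgebra.mem_toSubmodule, Subalgebra.mem_centralizer_iff] at this
      exact this (f s) rfl
    apply hfinj
    rw [hfmul, hfmul, hcomm]
  refine ⟨⟨N, key⟩, fun hsm => ?_⟩
  have h1 : Subgroup.centralizer (S (N + 1)) = Subgroup.centralizer (S N) :=
    key (N + 1) (Nat.le_succ N)
  exact absurd h1 (ne_of_gt (hsm (lt_add_one N)))
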